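/- Let Y and X ≥ 0 be real random variables, ψ: ℝ × (0,1) → ℝ increasing in its first argument, and suppose for all C > 1 and δ ∈ (0,1): Pr{X ≤ C and Y > ψ(C,δ)} < δ. Then for every ε > 0 and δ ∈ (0,1): Pr{X ≥ 1 and Y > ψ(X(1+ε), δε/(X(1+ε)))} ≤ δ. -/

import Mathlib

open MeasureTheory

/-- Auxiliary: a sequence in a nonempty set of reals whose values eventually go
below any value strictly greater than the infimum of `g` on `s`. -/
lemma exists_approx_inf_seq (g : ℝ → ℝ) (s : Set ℝ) (hs : s.Nonempty) :
    ∃ u : ℕ → ℝ, (∀ m, u m ∈ s) ∧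
      ∀ x ∈ s, ∀ y : ℝ, g x < y → ∃ M : ℕ, ∀ m ≥ M, g (u m) < y := by
  by_cases hb : BddBelow (g '' s)
  · set L := sInf (g '' s) with hL
    have hne : (g '' s).Nonempty := hs.image g
    have hsel : ∀ m : ℕ, ∃ v ∈ s, g v < L + 1 / (m + 1) := by
      intro m
      have hpos : (0 : ℝ) < 1 / (m + 1) := by positivity
      have : sInf (g '' s) < L + 1 / (m + 1) := by
        rw [← hL]; linarith
      obtain ⟨b, hbmem, hblt⟩ := exists_lt_of_csInf_lt hne this
      obtain ⟨v, hv, rfl⟩ := hbmem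
      exact ⟨v, hv, hblt⟩
    choose u hu hult using hsel
    refine ⟨u, hu, fun x hx y hxy => ?_⟩
    have hLx : L ≤ g x := csInf_le hb ⟨x, hx, rfl⟩
    have hLy : 0 < y - L := by linarith
    obtain ⟨M, hM⟩ := exists_nat_one_div_lt hLy
    refine ⟨M, fun m hm => ?_⟩
    have h1 : (1 : ℝ) / (m + 1) ≤ 1 / (M + 1) := by
      apply div_le_div_of_nonneg_left (by norm_num) (by positivity)
      have := (Nat.cast_le (α := ℝ)).mpr hm
      linarith
    calc g (u m) < L + 1 / (m + 1) := hult m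
      _ ≤ L + 1 / (M + 1) := by linarith
      _ < y := by linarith
  · have hsel : ∀ m : ℕ, ∃ v ∈ s, g v < -(m : ℝ) := by
      intro m
      by_contra hcon
      push_neg at hcon
      exact hb ⟨-(m : ℝ), fun b ⟨v, hv, hvb⟩ => hvb ▸ hcon v hv⟩
    choose u hu hult using hsel
    refine ⟨u, hu, fun x hx y hxy => ?_⟩
    obtain ⟨M, hM⟩ := exists_nat_gt (-y)
    refine ⟨M, fun m hm => ?_⟩
    have : -(m : ℝ) ≤ -(M : ℝ) := by
      simp only [neg_le_neg_iff]; exact_mod_cast hm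
    calc g (u m) < -(m : ℝ) := hult m
      _ ≤ -(M : ℝ) := this
      _ < y := by linarith

/-- stratification lemma. If for all `C > 1` and `δ ∈ (0,1)` we have
`Pr{X ≤ C ∧ Y > ψ(C,δ)} < δ`, then for every `ε > 0` and `δ ∈ (0,1)`,
`Pr{X ≥ 1 ∧ Y > ψ(X(1+ε), δε/(X(1+ε)))} ≤ δ`. -/
theorem stratification {Ω : Type*} [MeasurableSpace Ω]
    (μ : Measure Ω) [IsProbabilityMeasure μ]
    (X Y : Ω → ℝ) (hX : ∀ ω, 0 ≤ X ω)
    (ψ : ℝ → ℝ → ℝ) (hψ : ∀ δ, Monotone fun C => ψ C δ)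
    (H : ∀ C > (1 : ℝ), ∀ δ ∈ Set.Ioo (0 : ℝ) 1,
      μ {ω | X ω ≤ C ∧ ψ C δ < Y ω} < ENNReal.ofReal δ) :
    ∀ ε > (0 : ℝ), ∀ δ ∈ Set.Ioo (0 : ℝ) 1,
      μ {ω | 1 ≤ X ω ∧ ψ (X ω * (1 + ε)) (δ * ε / (X ω * (1 + ε))) < Y ω}
        ≤ ENNReal.ofReal δ := by
  intro ε hε δ hδ
  obtain ⟨hδ0, hδ1⟩ := hδ
  have h1ε : (1 : ℝ) < 1 + ε := by linarith
  set h : ℝ → ℝ := fun x => ψ (x * (1 + ε)) (δ * ε / (x * (1 + ε))) with hh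
  set A : ℝ → Set Ω := fun x => {ω | X ω ≤ x * (1 + ε) ∧ h x < Y ω} with hA
  -- measure bound on each A x for x ≥ 1
  have hAbound : ∀ x : ℝ, 1 ≤ x → μ (A x) ≤ ENNReal.ofReal (δ * ε / (x * (1 + ε))) := by
    intro x hx
    have hx0 : (0 : ℝ) < x := by linarith
    have hC : (1 : ℝ) < x * (1 + ε) := by nlinarith
    have hmem : δ * ε / (x * (1 + ε)) ∈ Set.Ioo (0 : ℝ) 1 := by
      constructor
      · positivity
      · rw [div_lt_one (by positivity)]
        nlinarith
    exact (H _ hC _ hmem).le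
  -- per-scale bound
  have key : ∀ t : ℝ, 1 ≤ t →
      μ {ω | t ≤ X ω ∧ X ω < t * (1 + ε) ∧ h (X ω) < Y ω}
        ≤ ENNReal.ofReal (δ * ε / (t * (1 + ε))) := by
    intro t ht
    have ht0 : (0 : ℝ) < t := by linarith
    set s : Set ℝ := Set.Ico t (t * (1 + ε)) with hs
    have hsne : s.Nonempty := ⟨t, le_refl t, by nlinarith⟩
    obtain ⟨u, hu, hconv⟩ := exists_approx_inf_seq h s hsne
    set B : ℕ → Set Ω := fun M => ⋂ (m : ℕ) (_ : M ≤ m), A (u m) with hB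
    have hBmono : Monotone B := by
      intro M M' hMM'
      exact Set.iInter₂_mono' fun m hm => ⟨m, hMM'.trans hm, subset_rfl⟩
    have hsub : {ω | t ≤ X ω ∧ X ω < t * (1 + ε) ∧ h (X ω) < Y ω} ⊆ ⋃ M, B M := by
      intro ω ⟨h1, h2, h3⟩
      obtain ⟨M, hM⟩ := hconv (X ω) ⟨h1, h2⟩ (Y ω) h3
      refine Set.mem_iUnion.mpr ⟨M, Set.mem_iInter₂.mpr fun m hm => ⟨?_, hM m hm⟩⟩
      have : t ≤ u m := (hu m).1
      nlinarith [h2]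
    calc μ {ω | t ≤ X ω ∧ X ω < t * (1 + ε) ∧ h (X ω) < Y ω}
        ≤ μ (⋃ M, B M) := measure_mono hsub
      _ = ⨆ M, μ (B M) := hBmono.measure_iUnion
      _ ≤ ENNReal.ofReal (δ * ε / (t * (1 + ε))) := by
          refine iSup_le fun M => ?_
          have hBA : B M ⊆ A (u M) := Set.iInter₂_subset M (le_refl M)
          have huM : 1 ≤ u M := le_trans ht (hu M).1
          refine le_trans (measure_mono hBA) (le_trans (hAbound (u M) huM) ?_)
          apply ENNReal.ofReal_le_ofReal
          apply div_le_div_of_nonneg_left (by positivity) (by positivity)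
          have : t ≤ u M := (hu M).1
          nlinarith
  -- decomposition into scales
  set E : Set Ω := {ω | 1 ≤ X ω ∧ ψ (X ω * (1 + ε)) (δ * ε / (X ω * (1 + ε))) < Y ω} with hE
  set Ek : ℕ → Set Ω := fun k =>
    {ω | (1 + ε) ^ k ≤ X ω ∧ X ω < (1 + ε) ^ k * (1 + ε) ∧ h (X ω) < Y ω} with hEk
  have hEsub : E ⊆ ⋃ k, Ek k := by
    intro ω ⟨h1, h2⟩
    have hex : ∃ n : ℕ, X ω < (1 + ε) ^ n := pow_unbounded_of_one_lt (X ω) h1ε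
    classical
    have hnlt : X ω < (1 + ε) ^ Nat.find hex := Nat.find_spec hex
    have hn0 : Nat.find hex ≠ 0 := by
      intro h0
      rw [h0, pow_zero] at hnlt
      linarith
    obtain ⟨k, hk⟩ := Nat.exists_eq_succ_of_ne_zero hn0
    rw [hk] at hnlt
    have hkle : (1 + ε) ^ k ≤ X ω := by
      by_contra hcon
      push_neg at hcon
      exact Nat.find_min hex (hk ▸ Nat.lt_succ_self k) hcon
    refine Set.mem_iUnion.mpr ⟨k, hkle, ?_, h2⟩
    rw [← pow_succ]
    exact hnlt
  have hterm : ∀ k : ℕ, μ (Ek k) ≤ ENNReal.ofReal (δ * ε / (1 + ε) * (1 / (1 + ε)) ^ k) := by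
    intro k
    have hpow : (1 : ℝ) ≤ (1 + ε) ^ k := one_le_pow₀ (by linarith)
    refine le_trans (key ((1 + ε) ^ k) hpow) (le_of_eq ?_)
    congr 1
    have hne : ((1 + ε) : ℝ) ^ k ≠ 0 := by positivity
    rw [one_div_pow, div_mul_div_comm, mul_one, mul_comm ((1 + ε) ^ k)]
  have hsummable : Summable (fun k : ℕ => δ * ε / (1 + ε) * (1 / (1 + ε)) ^ k) := by
    apply Summable.mul_left
    apply summable_geometric_of_lt_one (by positivity)
    rw [div_lt_one (by linarith)]
    linarith
  calc μ E ≤ μ (⋃ k, Ek k) := measure_mono hEsub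
    _ ≤ ∑' k, μ (Ek k) := measure_iUnion_le _
    _ ≤ ∑' k, ENNReal.ofReal (δ * ε / (1 + ε) * (1 / (1 + ε)) ^ k) :=
        ENNReal.tsum_le_tsum hterm
    _ = ENNReal.ofReal (∑' k, δ * ε / (1 + ε) * (1 / (1 + ε)) ^ k) := by
        rw [ENNReal.ofReal_tsum_of_nonneg (fun k => by positivity) hsummable]
    _ ≤ ENNReal.ofReal δ := by
        apply ENNReal.ofReal_le_ofReal
        rw [tsum_mul_left, tsum_geometric_of_lt_one (by positivity)
          (by rw [div_lt_one (by linarith)]; linarith)]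
        have h2 : (1 : ℝ) - 1 / (1 + ε) = ε / (1 + ε) := by
          field_simp
          ring
        have h3 : δ * ε / (1 + ε) * (ε / (1 + ε))⁻¹ = δ := by
          field_simp
        rw [h2, h3]
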